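/- (Lemma 5, lower-end truncation step) In the setup below, assume additionally that f(θ·x) ≤ θ^d·f(x) for all x ∈ ℝ₊ⁿ and θ ∈ [0,1], where d ∈ (0,1]. Then for every nonempty S ⊆ {1,…,n} with |S| ≤ k: v₂(S) ≥ v₁(S) / (1 + a^d·k/(ε−Δ)). -/

import Mathlib

open MeasureTheory ProbabilityTheory

/-- For a subset `S` of coordinates, `mask S x` is the vector agreeing with `x` on `S`
and equal to `0` outside `S`. -/
def mask {n : ℕ} (S : Finset (Fin n)) (x : Fin n → ℝ) : Fin n → ℝ :=
  fun i => if i ∈ S then x i else 0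

/-- Lemma 5 (lower-end truncation step): if moreover `f (θ • x) ≤ θ^d · f x` for
`θ ∈ [0,1]` with `d ∈ (0,1]`, then with `X̃_i = X̂_i·1{X̂_i > a·τ_i}`,
`v₂(S) = E[f(X̃_S)]` satisfies `v₂(S) ≥ v₁(S)/(1 + a^d·k/(ε−Δ))` for every nonempty
`S` with `|S| ≤ k`. -/
theorem lower_end_truncation_bound
    {Ωs : Type*} [MeasurableSpace Ωs] (μ : Measure Ωs) [IsProbabilityMeasure μ]
    {n : ℕ} (hn : 1 ≤ n)
    (X : Fin n → Ωs → ℝ)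
    (hX_meas : ∀ i, Measurable (X i))
    (hX_nonneg : ∀ i ω, 0 ≤ X i ω)
    (hX_indep : iIndepFun X μ)
    (f : (Fin n → ℝ) → ℝ)
    (hf_meas : Measurable f)
    (hf_nonneg : ∀ x : Fin n → ℝ, 0 ≤ x → 0 ≤ f x)
    (hf_mono : ∀ x y : Fin n → ℝ, 0 ≤ x → x ≤ y → f x ≤ f y)
    (hf_subadd : ∀ x y : Fin n → ℝ, 0 ≤ x → 0 ≤ y → f (x + y) ≤ f x + f y)
    (d : ℝ) (hd : d ∈ Set.Ioc (0 : ℝ) 1)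
    (hf_hom : ∀ (x : Fin n → ℝ) (θ : ℝ), 0 ≤ x → θ ∈ Set.Icc (0 : ℝ) 1 →
      f (θ • x) ≤ θ ^ d * f x)
    (k : ℕ) (hk : 1 ≤ k)
    (ε Δ : ℝ) (hε : ε ∈ Set.Ioo (0 : ℝ) 1) (hΔ : Δ ∈ Set.Ico (0 : ℝ) ε)
    (τ : Fin n → ℝ) (hτ : ∀ i, 0 ≤ τ i)
    (hquant : ∀ i, 1 - ε ≤ (μ {ω | X i ω ≤ τ i}).toReal ∧
      (μ {ω | X i ω ≤ τ i}).toReal ≤ 1 - ε + Δ)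
    (H : Fin n → ℝ)
    (hH : ∀ i, H i = (∫ ω in {ω | τ i < X i ω}, f (Pi.single i (X i ω)) ∂μ) /
      (μ {ω | τ i < X i ω}).toReal)
    (hH_int : ∀ i, Integrable (fun ω => f (Pi.single i (X i ω))) μ)
    (cst : Fin n → ℝ) (hcst : ∀ i, τ i < cst i)
    (hcstH : ∀ i, f (Pi.single i (cst i)) = H i)
    (Xhat : Fin n → Ωs → ℝ)
    (hXhat : ∀ i ω, Xhat i ω = if X i ω ≤ τ i then X i ω else cst i)
    (a : ℝ) (ha : a ∈ Set.Icc (0 : ℝ) 1)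
    (Xtil : Fin n → Ωs → ℝ)
    (hXtil : ∀ i ω, Xtil i ω = if a * τ i < Xhat i ω then Xhat i ω else 0)
    (v₁ v₂ : Finset (Fin n) → ℝ)
    (hv₁ : ∀ S, v₁ S = ∫ ω, f (mask S (fun i => Xhat i ω)) ∂μ)
    (hv₂ : ∀ S, v₂ S = ∫ ω, f (mask S (fun i => Xtil i ω)) ∂μ)
    (hv₁_int : ∀ S : Finset (Fin n),
      Integrable (fun ω => f (mask S (fun i => Xhat i ω))) μ)
    (hv₂_int : ∀ S : Finset (Fin n),
      Integrable (fun ω => f (mask S (fun i => Xtil i ω))) μ) :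
    ∀ S : Finset (Fin n), S.Nonempty → S.card ≤ k →
      v₁ S / (1 + a ^ d * k / (ε - Δ)) ≤ v₂ S := by
  intro S hS hcard
  obtain ⟨hε0, hε1⟩ := hε
  obtain ⟨hΔ0, hΔε⟩ := hΔ
  obtain ⟨ha0, ha1⟩ := ha
  have hεΔ : 0 < ε - Δ := by linarith
  have had : (0:ℝ) ≤ a ^ d := Real.rpow_nonneg ha0 d
  have hk' : (1:ℝ) ≤ (k:ℝ) := by exact_mod_cast hk
  have hA : (0:ℝ) ≤ a ^ d * k / (ε - Δ) := by positivity
  have hden : (0:ℝ) < 1 + a ^ d * k / (ε - Δ) := by linarith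
  have hXhat_nonneg : ∀ i ω, 0 ≤ Xhat i ω := by
    intro i ω; rw [hXhat]; split
    · exact hX_nonneg i ω
    · exact le_of_lt (lt_of_le_of_lt (hτ i) (hcst i))
  have hXtil_nonneg : ∀ i ω, 0 ≤ Xtil i ω := by
    intro i ω; rw [hXtil]; split
    · exact hXhat_nonneg i ω
    · exact le_refl 0
  have hXtil_le : ∀ i ω, Xtil i ω ≤ Xhat i ω := by
    intro i ω; rw [hXtil]; split
    · exact le_refl _
    · exact hXhat_nonneg i ω
  have hmask_nonneg : ∀ (g : Fin n → ℝ), (∀ i, 0 ≤ g i) → (0 : Fin n → ℝ) ≤ mask S g := by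
    intro g hg j
    simp only [mask, Pi.zero_apply]
    split
    · exact hg j
    · exact le_refl 0
  have hsingle_nonneg : ∀ i, (0 : Fin n → ℝ) ≤ Pi.single i (τ i) := by
    intro i j
    rcases eq_or_ne j i with h | h
    · subst h; simp [hτ j]
    · simp [Pi.single_eq_of_ne h]
  have hv₂nonneg : 0 ≤ v₂ S := by
    rw [hv₂]
    exact integral_nonneg fun ω =>
      hf_nonneg _ (hmask_nonneg _ (fun i => hXtil_nonneg i ω))
  -- key per-coordinate bound
  have hkey : ∀ i ∈ S, (ε - Δ) * f (Pi.single i (τ i)) ≤ v₂ S := by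
    intro i hi
    set s : Set Ωs := {ω | τ i < X i ω} with hs_def
    have hs : MeasurableSet s := measurableSet_lt measurable_const (hX_meas i)
    have hfe : 0 ≤ f (Pi.single i (τ i)) := hf_nonneg _ (hsingle_nonneg i)
    have hptwise : ∀ ω, s.indicator (fun _ => f (Pi.single i (τ i))) ω ≤
        f (mask S (fun j => Xtil j ω)) := by
      intro ω
      by_cases hω : ω ∈ s
      · rw [Set.indicator_of_mem hω]
        apply hf_mono _ _ (hsingle_nonneg i)
        intro j
        rcases eq_or_ne j i with h | h
        · subst h
          have hXj : τ j < X j ω := hω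
          have h1 : Xhat j ω = cst j := by rw [hXhat, if_neg (not_le.mpr hXj)]
          have h2 : a * τ j < Xhat j ω := by
            rw [h1]
            have : a * τ j ≤ τ j := by nlinarith [hτ j]
            exact lt_of_le_of_lt this (hcst j)
          have h3 : Xtil j ω = cst j := by rw [hXtil, if_pos h2, h1]
          simp only [mask, Pi.single_eq_same, if_pos hi, h3]
          exact le_of_lt (hcst j)
        · rw [Pi.single_eq_of_ne h]
          simp only [mask]
          split
          · exact hXtil_nonneg j ω
          · exact le_refl 0
      · rw [Set.indicator_of_notMem hω]
        exact hf_nonneg _ (hmask_nonneg _ fun j => hXtil_nonneg j ω)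
    have hint_ind : Integrable (s.indicator (fun _ => f (Pi.single i (τ i)))) μ :=
      (integrable_const _).indicator hs
    have h1 : ∫ ω, s.indicator (fun _ => f (Pi.single i (τ i))) ω ∂μ ≤ v₂ S := by
      rw [hv₂]
      exact integral_mono hint_ind (hv₂_int S) hptwise
    rw [integral_indicator_const _ hs] at h1
    have hμs : ε - Δ ≤ (μ s).toReal := by
      have hc : s = {ω | X i ω ≤ τ i}ᶜ := by ext ω; simp [hs_def, not_le]
      have hm : MeasurableSet {ω | X i ω ≤ τ i} :=
        measurableSet_le (hX_meas i) measurable_const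
      have hq := (hquant i).2
      rw [hc, measure_compl hm (measure_ne_top μ _), measure_univ,
        ENNReal.toReal_sub_of_le prob_le_one ENNReal.one_ne_top, ENNReal.toReal_one]
      linarith
    calc (ε - Δ) * f (Pi.single i (τ i))
        ≤ (μ s).toReal * f (Pi.single i (τ i)) :=
          mul_le_mul_of_nonneg_right hμs hfe
      _ ≤ v₂ S := by simpa [smul_eq_mul, measureReal_def] using h1
  -- mask S τ as sum of singles
  have hmask_sum : mask S τ = ∑ i ∈ S, Pi.single i (τ i) := by
    funext j
    rw [Finset.sum_apply]
    simp only [Pi.single_apply]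
    rw [Finset.sum_ite_eq S j τ]
    rfl
  have hsub_sum : ∀ T : Finset (Fin n), T.Nonempty →
      f (∑ i ∈ T, Pi.single i (τ i)) ≤ ∑ i ∈ T, f (Pi.single i (τ i)) := by
    intro T
    induction T using Finset.cons_induction with
    | empty => intro h; simp at h
    | cons i T hi ih =>
      intro _
      rcases T.eq_empty_or_nonempty with rfl | hT'
      · simp
      · rw [Finset.sum_cons, Finset.sum_cons]
        calc f (Pi.single i (τ i) + ∑ j ∈ T, Pi.single j (τ j))
            ≤ f (Pi.single i (τ i)) + f (∑ j ∈ T, Pi.single j (τ j)) :=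
              hf_subadd _ _ (hsingle_nonneg i)
                (Finset.sum_nonneg fun j _ => hsingle_nonneg j)
          _ ≤ _ := add_le_add_right (ih hT') _
  -- pointwise decomposition bound
  have hC : ∀ ω, f (mask S (fun i => Xhat i ω)) ≤
      f (mask S (fun i => Xtil i ω)) + a ^ d * f (mask S τ) := by
    intro ω
    have hdecomp : mask S (fun i => Xhat i ω) =
        mask S (fun i => Xtil i ω) + mask S (fun i => Xhat i ω - Xtil i ω) := by
      funext j
      simp only [mask, Pi.add_apply]
      split <;> ring
    have hY_nonneg : (0 : Fin n → ℝ) ≤ mask S (fun i => Xhat i ω - Xtil i ω) :=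
      hmask_nonneg _ fun i => sub_nonneg.mpr (hXtil_le i ω)
    have hY_le : mask S (fun i => Xhat i ω - Xtil i ω) ≤ a • mask S τ := by
      intro j
      by_cases hj : j ∈ S
      · simp only [mask, if_pos hj, Pi.smul_apply, smul_eq_mul]
        rw [hXtil]
        split
        · have := mul_nonneg ha0 (hτ j); linarith
        · rename_i h
          have := not_lt.mp h
          linarith
      · simp [mask, hj]
    have h1 : f (mask S (fun i => Xhat i ω)) ≤
        f (mask S (fun i => Xtil i ω)) + f (a • mask S τ) := by
      rw [hdecomp]
      refine le_trans
        (hf_subadd _ _ (hmask_nonneg _ fun i => hXtil_nonneg i ω) hY_nonneg) ?_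
      exact add_le_add_right (hf_mono _ _ hY_nonneg hY_le) _
    have h2 : f (a • mask S τ) ≤ a ^ d * f (mask S τ) :=
      hf_hom _ a (hmask_nonneg _ hτ) ⟨ha0, ha1⟩
    linarith
  have hint : v₁ S ≤ v₂ S + a ^ d * f (mask S τ) := by
    rw [hv₁, hv₂]
    have h := integral_mono (hv₁_int S)
      ((hv₂_int S).add (integrable_const (a ^ d * f (mask S τ)))) hC
    simp only [Pi.add_apply] at h
    rwa [integral_add (hv₂_int S) (integrable_const _), integral_const, measureReal_def, measure_univ,
      ENNReal.toReal_one, one_smul] at h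
  have hsum : f (mask S τ) ≤ ∑ i ∈ S, f (Pi.single i (τ i)) := by
    rw [hmask_sum]; exact hsub_sum S hS
  have hterm : ∀ i ∈ S, f (Pi.single i (τ i)) ≤ v₂ S / (ε - Δ) := by
    intro i hi
    rw [le_div_iff₀ hεΔ]
    have h := hkey i hi
    nlinarith
  have hsum2 : ∑ i ∈ S, f (Pi.single i (τ i)) ≤ (S.card : ℝ) * (v₂ S / (ε - Δ)) := by
    calc ∑ i ∈ S, f (Pi.single i (τ i)) ≤ ∑ _i ∈ S, v₂ S / (ε - Δ) :=
          Finset.sum_le_sum hterm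
      _ = (S.card : ℝ) * (v₂ S / (ε - Δ)) := by
          rw [Finset.sum_const, nsmul_eq_mul]
  have hcard' : (S.card : ℝ) ≤ (k : ℝ) := by exact_mod_cast hcard
  have h0 : 0 ≤ v₂ S / (ε - Δ) := div_nonneg hv₂nonneg hεΔ.le
  have htail : a ^ d * f (mask S τ) ≤ v₂ S * (a ^ d * k / (ε - Δ)) := by
    calc a ^ d * f (mask S τ)
        ≤ a ^ d * ((S.card : ℝ) * (v₂ S / (ε - Δ))) :=
          mul_le_mul_of_nonneg_left (le_trans hsum hsum2) had
      _ ≤ a ^ d * ((k : ℝ) * (v₂ S / (ε - Δ))) :=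
          mul_le_mul_of_nonneg_left (mul_le_mul_of_nonneg_right hcard' h0) had
      _ = v₂ S * (a ^ d * k / (ε - Δ)) := by ring
  rw [div_le_iff₀ hden, mul_add, mul_one]
  linarith
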